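/- Let ω = 0, g ≠ 0, κ, γ > 0 and d ∈ (−1,1). A triple (A, S, D) ∈ ℂ × ℂ × ℝ is an equilibrium of the Maxwell–Bloch equations (i.e. satisfies −κA + gS = 0, −γS + gAD = 0 and −4g Re( conj(A) S ) − 2γ(D − d) = 0) if and only if either (A, S, D) = (0, 0, d), or g² d > γκ (equivalently C_b > 1) together with D = γκ/g², S = (κ/g)A and |A|² = γ(d g² − γκ)/(2κ g²). In particular, if C_b ≤ 1 then (0, 0, d) is the only equilibrium. -/

import Mathlib

/-- **Classification of the equilibria of the Maxwell–Bloch equations with `ω = 0`.**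
A triple `(A, S, D)` is an equilibrium iff it is `(0, 0, d)`, or `g² d > γκ`
(i.e. `C_b > 1`) together with `D = γκ/g²`, `S = (κ/g)A` and
`|A|² = γ(d g² − γκ)/(2κ g²)`. In particular, if `C_b ≤ 1` then `(0,0,d)` is the
only equilibrium. -/
theorem maxwell_bloch_equilibria_classification
    (g κ γ d : ℝ) (hg : g ≠ 0) (hκ : 0 < κ) (hγ : 0 < γ)
    (hd : -1 < d ∧ d < 1)
    (A S : ℂ) (D : ℝ) :
    ((-(κ : ℂ) * A + (g : ℂ) * S = 0 ∧
        -(γ : ℂ) * S + (g : ℂ) * A * (D : ℂ) = 0 ∧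
        -4 * g * ((starRingEnd ℂ) A * S).re - 2 * γ * (D - d) = 0) ↔
      ((A = 0 ∧ S = 0 ∧ D = d) ∨
        (γ * κ < g ^ 2 * d ∧ D = γ * κ / g ^ 2 ∧ S = ((κ / g : ℝ) : ℂ) * A ∧
          ‖A‖ ^ 2 = γ * (d * g ^ 2 - γ * κ) / (2 * κ * g ^ 2)))) ∧
    (g ^ 2 * d / (κ * γ) ≤ 1 →
      (-(κ : ℂ) * A + (g : ℂ) * S = 0 ∧
        -(γ : ℂ) * S + (g : ℂ) * A * (D : ℂ) = 0 ∧
        -4 * g * ((starRingEnd ℂ) A * S).re - 2 * γ * (D - d) = 0) →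
      A = 0 ∧ S = 0 ∧ D = d) := by
  have hgC : (g : ℂ) ≠ 0 := by exact_mod_cast hg
  have hg2 : (0:ℝ) < g ^ 2 := by positivity
  have main : (-(κ : ℂ) * A + (g : ℂ) * S = 0 ∧
        -(γ : ℂ) * S + (g : ℂ) * A * (D : ℂ) = 0 ∧
        -4 * g * ((starRingEnd ℂ) A * S).re - 2 * γ * (D - d) = 0) ↔
      ((A = 0 ∧ S = 0 ∧ D = d) ∨
        (γ * κ < g ^ 2 * d ∧ D = γ * κ / g ^ 2 ∧ S = ((κ / g : ℝ) : ℂ) * A ∧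
          ‖A‖ ^ 2 = γ * (d * g ^ 2 - γ * κ) / (2 * κ * g ^ 2))) := by
    constructor
    · rintro ⟨h1, h2, h3⟩
      have hS : S = ((κ / g : ℝ) : ℂ) * A := by
        push_cast
        field_simp
        linear_combination h1
      by_cases hA : A = 0
      · left
        subst hA
        have hS0 : S = 0 := by simp [hS]
        subst hS0
        refine ⟨rfl, rfl, ?_⟩
        simp at h3
        rcases h3 with h | h
        · linarith
        · linarith
      · right
        -- D = γκ/g²
        have hfac : ((g:ℂ) * (D:ℂ) - (γ:ℂ) * (κ:ℂ) / (g:ℂ)) * A = 0 := by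
          rw [hS] at h2
          push_cast at h2
          field_simp
          field_simp at h2
          linear_combination h2
        have hfac0 : (g:ℂ) * (D:ℂ) - (γ:ℂ) * (κ:ℂ) / (g:ℂ) = 0 :=
          (mul_eq_zero.mp hfac).resolve_right hA
        have hDr : ((g * D - γ * κ / g : ℝ) : ℂ) = 0 := by
          push_cast
          linear_combination hfac0
        have hDr' : g * D - γ * κ / g = 0 := by exact_mod_cast hDr
        have hD : D = γ * κ / g ^ 2 := by
          field_simp at hDr' ⊢
          linarith
        -- real part computation
        have hre : ((starRingEnd ℂ) A * S).re = (κ / g) * Complex.normSq A := by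
          rw [hS]
          simp [Complex.mul_re, Complex.conj_re, Complex.conj_im, Complex.normSq_apply,
            Complex.ofReal_re, Complex.ofReal_im]
          ring
        rw [hre, hD] at h3
        field_simp at h3
        have hfac3 : g * (4 * κ * Complex.normSq A * g ^ 2 + 2 * γ * (γ * κ - g ^ 2 * d)) = 0 := by
          linear_combination -g * h3
        have key : 4 * κ * Complex.normSq A * g ^ 2 = 2 * γ * (g ^ 2 * d - γ * κ) := by
          have := (mul_eq_zero.mp hfac3).resolve_left hg
          linarith
        have hnsq : Complex.normSq A = γ * (d * g ^ 2 - γ * κ) / (2 * κ * g ^ 2) := by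
          field_simp
          linear_combination key / 2
        have hpos : 0 < Complex.normSq A := Complex.normSq_pos.mpr hA
        have habs : ‖A‖ ^ 2 = γ * (d * g ^ 2 - γ * κ) / (2 * κ * g ^ 2) := by
          rw [Complex.sq_norm, hnsq]
        refine ⟨?_, hD, hS, habs⟩
        have hnum : 0 < γ * (d * g ^ 2 - γ * κ) := by nlinarith [key, hpos, mul_pos hκ hg2]
        nlinarith [hnum]
    · rintro (⟨hA, hS0, hD⟩ | ⟨hlt, hD, hS, habs⟩)
      · subst hA; subst hS0; subst hD
        refine ⟨by ring, by ring, by simp⟩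
      · subst hD; subst hS
        have hre : ((starRingEnd ℂ) A * (((κ / g : ℝ) : ℂ) * A)).re
            = (κ / g) * Complex.normSq A := by
          simp [Complex.mul_re, Complex.conj_re, Complex.conj_im, Complex.normSq_apply,
            Complex.ofReal_re, Complex.ofReal_im]
          ring
        have hnsq : Complex.normSq A = γ * (d * g ^ 2 - γ * κ) / (2 * κ * g ^ 2) := by
          rw [← Complex.sq_norm, habs]
        refine ⟨?_, ?_, ?_⟩
        · push_cast
          field_simp
          ring
        · push_cast
          field_simp
          ring
        · rw [hre, hnsq]
          field_simp
          ring
  refine ⟨main, ?_⟩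
  intro hC heq
  rcases main.mp heq with h | ⟨hlt, _, _, _⟩
  · exact h
  · exfalso
    have hκγ : (0:ℝ) < κ * γ := mul_pos hκ hγ
    rw [div_le_one hκγ] at hC
    nlinarith
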